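/- Let M be a convex multiplicative system of means and let p ∈ [1,∞] be such that M((s,1−s),(1,0)) = s^{1/p} for all s ∈ (0,1) (with 1/∞ = 0). Then for every n ≥ 1, the function x ↦ n^{1/p} · M(u_n, (|x_1|,…,|x_n|)) is a norm on ℝ^n, where u_n = (1/n,…,1/n) ∈ Δ_n. -/

import Mathlib

open scoped NNReal ENNReal BigOperators

/-- The power mean `M_p` of order `p ∈ [0,∞]` with weights `w` and arguments `x`. -/
noncomputable def powerMean (p : ℝ≥0∞) {n : ℕ} (w x : Fin n → ℝ≥0) : ℝ≥0 :=
  if p = ∞ then (Finset.univ.filter (fun i => 0 < w i)).sup x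
  else if p = 0 then ∏ i, x i ^ ((w i : ℝ))
  else (∑ i, w i * x i ^ p.toReal) ^ (1 / p.toReal)

/-- A system of means: for each `n`, a function `M n : Δ_n × ℝ≥0ⁿ → ℝ≥0`
(defined on all of `ℝ≥0ⁿ × ℝ≥0ⁿ`, with the axioms demanded only when `∑ w = 1`),
satisfying functoriality, consistency and monotonicity. -/
structure MeanSystem where
  M : ∀ n : ℕ, (Fin n → ℝ≥0) → (Fin n → ℝ≥0) → ℝ≥0
  functorial : ∀ {m n : ℕ} (f : Fin m → Fin n) (w : Fin m → ℝ≥0),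
    (∑ i, w i) = 1 → ∀ x : Fin n → ℝ≥0,
      M n (fun j => ∑ i ∈ Finset.univ.filter (fun i => f i = j), w i) x = M m w (x ∘ f)
  consistent : ∀ c : ℝ≥0, M 1 (fun _ => 1) (fun _ => c) = c
  mono : ∀ {n : ℕ} (w x y : Fin n → ℝ≥0), (∑ i, w i) = 1 →
    (∀ i, x i ≤ y i) → M n w x ≤ M n w y

/-- Multiplicativity of a system of means, with respect to the fixed bijection
`finProdFinEquiv : Fin m × Fin n ≃ Fin (m * n)`. -/
def MeanSystem.IsMultiplicative (S : MeanSystem) : Prop :=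
  ∀ {m n : ℕ} (w x : Fin m → ℝ≥0) (v y : Fin n → ℝ≥0),
    (∑ i, w i) = 1 → (∑ j, v j) = 1 →
    S.M (m * n) (fun k => w (finProdFinEquiv.symm k).1 * v (finProdFinEquiv.symm k).2)
        (fun k => x (finProdFinEquiv.symm k).1 * y (finProdFinEquiv.symm k).2)
      = S.M m w x * S.M n v y

/-- Convexity of a system of means. -/
def MeanSystem.IsConvex (S : MeanSystem) : Prop :=
  ∀ {n : ℕ} (w x y : Fin n → ℝ≥0), (∑ i, w i) = 1 →
    S.M n w (fun i => (x i + y i) / 2) ≤ max (S.M n w x) (S.M n w y)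


section MeanSystemAux

private lemma sum_unif {n : ℕ} (hn : 1 ≤ n) : (∑ _i : Fin n, (n : ℝ≥0)⁻¹) = 1 := by
  have hn0 : (n : ℝ≥0) ≠ 0 := Nat.cast_ne_zero.2 (by omega)
  simp [Finset.sum_const, Finset.card_univ, nsmul_eq_mul, mul_inv_cancel₀ hn0]

/-- Homogeneity of a multiplicative mean system. -/
private lemma mean_homog (S : MeanSystem) (hmul : S.IsMultiplicative) {n : ℕ}
    (w x : Fin n → ℝ≥0) (hw : (∑ i, w i) = 1) (c : ℝ≥0) :
    S.M n w (fun i => c * x i) = c * S.M n w x := by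
  have h1 : (∑ _j : Fin 1, (1 : ℝ≥0)) = 1 := by simp
  have hM := hmul w x (fun _ : Fin 1 => 1) (fun _ : Fin 1 => c) hw h1
  set e := (finProdFinEquiv : Fin n × Fin 1 ≃ Fin (n * 1)) with he
  set f : Fin n → Fin (n * 1) := fun j => e (j, 0) with hf
  have hsnd : ∀ k : Fin (n * 1), (e.symm k).2 = 0 := fun k => Subsingleton.elim _ _
  have hfib : ∀ k, (Finset.univ.filter (fun i => f i = k)) = {(e.symm k).1} := by
    intro k
    ext i
    simp only [Finset.mem_filter, Finset.mem_univ, true_and, Finset.mem_singleton]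
    constructor
    · rintro rfl
      simp [hf]
    · rintro rfl
      have h : ((e.symm k).1, (0 : Fin 1)) = e.symm k := by
        rw [← hsnd k]
      rw [hf]
      simp only [h, Equiv.apply_symm_apply]
  simp only [mul_one, S.consistent] at hM
  have hfun := S.functorial f w hw (fun k => x (e.symm k).1 * c)
  have hpush : (fun k => ∑ i ∈ Finset.univ.filter (fun i => f i = k), w i)
      = fun k => w (e.symm k).1 := by
    funext k
    rw [hfib k, Finset.sum_singleton]
  rw [hpush] at hfun
  have hcomp : ((fun k => x (e.symm k).1 * c) ∘ f) = fun j => x j * c := by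
    funext j'
    simp [hf]
  rw [hcomp] at hfun
  have hM' : S.M n w (fun j => x j * c) = S.M n w x * c := by
    rw [← hfun]; exact hM
  calc S.M n w (fun i => c * x i) = S.M n w (fun i => x i * c) := by
        congr 1; funext i; ring
    _ = S.M n w x * c := hM'
    _ = c * S.M n w x := mul_comm _ _

/-- Dyadic quasi-convexity. -/
private lemma mean_dyadic (S : MeanSystem) (hconv : S.IsConvex) {n : ℕ}
    (w : Fin n → ℝ≥0) (hw : (∑ i, w i) = 1) (x y : Fin n → ℝ≥0) :
    ∀ (m k l : ℕ), k + l = 2 ^ m →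
      S.M n w (fun i => ((k : ℝ≥0) * x i + (l : ℝ≥0) * y i) / 2 ^ m)
        ≤ max (S.M n w x) (S.M n w y) := by
  intro m
  induction m with
  | zero =>
    intro k l hkl
    obtain ⟨rfl, rfl⟩ | ⟨rfl, rfl⟩ : (k = 0 ∧ l = 1) ∨ (k = 1 ∧ l = 0) := by omega
    · have hy : (fun i => (((0 : ℕ) : ℝ≥0) * x i + ((1 : ℕ) : ℝ≥0) * y i) / 2 ^ 0) = y := by
        funext i; simp
      rw [hy]; exact le_max_right _ _
    · have hx : (fun i => (((1 : ℕ) : ℝ≥0) * x i + ((0 : ℕ) : ℝ≥0) * y i) / 2 ^ 0) = x := by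
        funext i; simp
      rw [hx]; exact le_max_left _ _
  | succ m ih =>
    intro k l hkl
    have hP : (0 : ℕ) < 2 ^ m := pow_pos (by norm_num) m
    have h2 : 2 ^ (m + 1) = 2 ^ m + 2 ^ m := by ring
    set k1 := k / 2 with hk1d
    set k2 := k - k1 with hk2d
    set l1 := 2 ^ m - k1 with hl1d
    set l2 := l - l1 with hl2d
    have hk12 : k1 + k2 = k := by omega
    have hl12 : l1 + l2 = l := by omega
    have hc1 : k1 + l1 = 2 ^ m := by omega
    have hc2 : k2 + l2 = 2 ^ m := by omega
    have hab := hconv w (fun i => ((k1 : ℝ≥0) * x i + (l1 : ℝ≥0) * y i) / 2 ^ m)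
      (fun i => ((k2 : ℝ≥0) * x i + (l2 : ℝ≥0) * y i) / 2 ^ m) hw
    have heq : (fun i => ((k : ℝ≥0) * x i + (l : ℝ≥0) * y i) / 2 ^ (m + 1))
        = fun i => ((((k1 : ℝ≥0) * x i + (l1 : ℝ≥0) * y i) / 2 ^ m)
            + (((k2 : ℝ≥0) * x i + (l2 : ℝ≥0) * y i) / 2 ^ m)) / 2 := by
      funext i
      rw [← add_div, div_div, ← pow_succ]
      congr 1
      have e1 : (k : ℝ≥0) = (k1 : ℝ≥0) + (k2 : ℝ≥0) := by exact_mod_cast hk12.symm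
      have e2 : (l : ℝ≥0) = (l1 : ℝ≥0) + (l2 : ℝ≥0) := by exact_mod_cast hl12.symm
      rw [e1, e2]; ring
    rw [heq]
    exact hab.trans (max_le (ih k1 l1 hc1) (ih k2 l2 hc2))

private lemma exists_dyadic_btwn {a b : ℝ≥0} (hab : a < b) (hb : b ≤ 1) :
    ∃ m k : ℕ, 0 < k ∧ k < 2 ^ m ∧ a < (k : ℝ≥0) / 2 ^ m ∧ (k : ℝ≥0) / 2 ^ m < b := by
  obtain ⟨m, hm⟩ := exists_pow_lt_of_lt_one
    (sub_pos.2 (NNReal.coe_lt_coe.2 hab)) (by norm_num : (1 / 2 : ℝ) < 1)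
  set A := (a : ℝ) with hA
  set B := (b : ℝ) with hB
  have h2m : (0 : ℝ) < 2 ^ m := by positivity
  have hm' : 1 < (B - A) * 2 ^ m := by
    rw [div_pow, one_pow, div_lt_iff₀ h2m] at hm
    linarith
  have hA0 : (0 : ℝ) ≤ A := a.coe_nonneg
  have hfl : (0 : ℤ) ≤ ⌊A * 2 ^ m⌋ := Int.floor_nonneg.2 (by positivity)
  obtain ⟨k, hk⟩ : ∃ k : ℕ, k = ⌊A * 2 ^ m⌋.toNat + 1 := ⟨_, rfl⟩
  have htn : ((⌊A * 2 ^ m⌋.toNat : ℕ) : ℝ) = (⌊A * 2 ^ m⌋ : ℝ) := by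
    exact_mod_cast Int.toNat_of_nonneg hfl
  have hkc : (k : ℝ) = (⌊A * 2 ^ m⌋ : ℝ) + 1 := by
    rw [hk]; push_cast; linarith [htn]
  have hk1 : A * 2 ^ m < (k : ℝ) := by
    rw [hkc]; exact Int.lt_floor_add_one _
  have hk2 : (k : ℝ) ≤ A * 2 ^ m + 1 := by
    rw [hkc]; have := Int.floor_le (A * 2 ^ m); linarith
  have hkB : (k : ℝ) < B * 2 ^ m := by nlinarith
  have hklt : k < 2 ^ m := by
    have hB1 : B ≤ 1 := by exact_mod_cast hb
    have hlt : (k : ℝ) < (2 : ℝ) ^ m := by nlinarith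
    exact_mod_cast hlt
  refine ⟨m, k, by omega, hklt, ?_, ?_⟩
  · rw [← NNReal.coe_lt_coe]
    push_cast
    rw [lt_div_iff₀ h2m]
    exact hk1
  · rw [← NNReal.coe_lt_coe]
    push_cast
    rw [div_lt_iff₀ h2m]
    exact hkB

/-- Subadditivity of a convex multiplicative mean system. -/
private lemma mean_subadd (S : MeanSystem) (hconv : S.IsConvex) (hmul : S.IsMultiplicative)
    {n : ℕ} (w : Fin n → ℝ≥0) (hw : (∑ i, w i) = 1) (x y : Fin n → ℝ≥0) :
    S.M n w (fun i => x i + y i) ≤ S.M n w x + S.M n w y := by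
  set A := S.M n w x with hA
  set B := S.M n w y with hB
  refine _root_.le_of_forall_pos_le_add fun ε hε => ?_
  set T : ℝ≥0 := A + B + ε with hT
  have hT0 : 0 < T := by positivity
  have hTne : T ≠ 0 := hT0.ne'
  have h2m0 : ∀ m : ℕ, (0 : ℝ≥0) < 2 ^ m := fun m => by positivity
  have hltT : A / T < (A + ε) / T := by
    apply div_lt_div_of_pos_right ?_ hT0
    exact lt_add_of_pos_right _ hε
  have hub : (A + ε) / T ≤ 1 := by
    rw [div_le_one hT0, hT, add_right_comm]
    exact le_add_of_nonneg_right zero_le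
  obtain ⟨m, k, hk0, hklt, hd1, hd2⟩ := exists_dyadic_btwn hltT hub
  set l : ℕ := 2 ^ m - k with hl
  have hkl : k + l = 2 ^ m := by omega
  have hl0 : 0 < l := by omega
  have hkne : ((k : ℝ≥0)) ≠ 0 := Nat.cast_ne_zero.2 hk0.ne'
  have hlne : ((l : ℝ≥0)) ≠ 0 := Nat.cast_ne_zero.2 hl0.ne'
  have hkT0 : (0 : ℝ≥0) < (k : ℝ≥0) * T := by
    exact mul_pos (pos_iff_ne_zero.2 hkne) hT0
  have hlT0 : (0 : ℝ≥0) < (l : ℝ≥0) * T := by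
    exact mul_pos (pos_iff_ne_zero.2 hlne) hT0
  have hk2m : A * 2 ^ m < (k : ℝ≥0) * T := (div_lt_div_iff₀ hT0 (h2m0 m)).1 hd1
  have hkT : (k : ℝ≥0) * T < (A + ε) * 2 ^ m := (div_lt_div_iff₀ (h2m0 m) hT0).1 hd2
  have hBl : B * 2 ^ m ≤ (l : ℝ≥0) * T := by
    rw [← NNReal.coe_le_coe]
    rw [← NNReal.coe_lt_coe] at hkT
    have hTr : ((T : ℝ≥0) : ℝ) = (A : ℝ) + (B : ℝ) + (ε : ℝ) := by rw [hT]; push_cast; ring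
    have hlr : ((l : ℕ) : ℝ) = 2 ^ m - (k : ℝ) := by
      rw [hl]; push_cast [Nat.cast_sub hklt.le]; ring
    push_cast at hkT ⊢
    rw [hlr, hTr] at *
    nlinarith
  set x' : Fin n → ℝ≥0 := fun i => (2 ^ m / ((k : ℝ≥0) * T)) * x i with hx'
  set y' : Fin n → ℝ≥0 := fun i => (2 ^ m / ((l : ℝ≥0) * T)) * y i with hy'
  have hMx' : S.M n w x' = (2 ^ m / ((k : ℝ≥0) * T)) * A := mean_homog S hmul w x hw _
  have hMy' : S.M n w y' = (2 ^ m / ((l : ℝ≥0) * T)) * B := mean_homog S hmul w y hw _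
  have hx'le : S.M n w x' ≤ 1 := by
    rw [hMx', div_mul_eq_mul_div, div_le_one hkT0, mul_comm]
    exact hk2m.le
  have hy'le : S.M n w y' ≤ 1 := by
    rw [hMy', div_mul_eq_mul_div, div_le_one hlT0, mul_comm]
    exact hBl
  have heq : (fun i => (x i + y i) / T)
      = fun i => ((k : ℝ≥0) * x' i + (l : ℝ≥0) * y' i) / 2 ^ m := by
    funext i
    rw [hx', hy']
    have h2ne : ((2 : ℝ≥0) ^ m) ≠ 0 := (h2m0 m).ne'
    field_simp
  have hchain : S.M n w (fun i => x i + y i) = T * S.M n w (fun i => (x i + y i) / T) := by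
    rw [← mean_homog S hmul w _ hw T]
    congr 1
    funext i
    rw [mul_comm, div_mul_cancel₀ _ hTne]
  rw [hchain, heq]
  have hdy := mean_dyadic S hconv w hw x' y' m k l hkl
  calc T * S.M n w (fun i => ((k : ℝ≥0) * x' i + (l : ℝ≥0) * y' i) / 2 ^ m)
      ≤ T * max (S.M n w x') (S.M n w y') := mul_le_mul_right hdy T
    _ ≤ T * 1 := mul_le_mul_right (max_le hx'le hy'le) T
    _ = A + B + ε := by rw [mul_one]

private lemma mean_indicator_pos (S : MeanSystem) (p : ℝ≥0∞)
    (hθ : ∀ s : ℝ≥0, 0 < s → s < 1 → S.M 2 ![s, 1 - s] ![1, 0] = s ^ p.toReal⁻¹)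
    {n : ℕ} (hn : 1 ≤ n) (j : Fin n) :
    0 < S.M n (fun _ => (n : ℝ≥0)⁻¹) (fun i => if i = j then 1 else 0) := by
  obtain h1 | h2 : n = 1 ∨ 2 ≤ n := by omega
  · subst h1
    have hval : S.M 1 (fun _ => ((1 : ℕ) : ℝ≥0)⁻¹) (fun i => if i = j then 1 else 0) = 1 := by
      have hwq : (fun _ : Fin 1 => ((1 : ℕ) : ℝ≥0)⁻¹) = fun _ : Fin 1 => (1 : ℝ≥0) := by
        funext i; norm_num
      have hxq : (fun i : Fin 1 => if i = j then (1 : ℝ≥0) else 0)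
          = fun _ : Fin 1 => (1 : ℝ≥0) := by
        funext i
        simp [Subsingleton.elim i j]
      rw [hwq, hxq]
      exact S.consistent 1
    rw [hval]; norm_num
  · have hw : (∑ _i : Fin n, (n : ℝ≥0)⁻¹) = 1 := sum_unif hn
    have hn0 : (n : ℝ≥0) ≠ 0 := Nat.cast_ne_zero.2 (by omega)
    have hinvle : (n : ℝ≥0)⁻¹ ≤ 1 := by
      apply inv_le_one_of_one_le₀
      exact_mod_cast (by omega : 1 ≤ n)
    set f : Fin n → Fin 2 := fun i => if i = j then 0 else 1 with hf
    have hfun := S.functorial f (fun _ => (n : ℝ≥0)⁻¹) hw ![1, 0]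
    have hpush : (fun j' : Fin 2 => ∑ i ∈ Finset.univ.filter (fun i => f i = j'), (n : ℝ≥0)⁻¹)
        = ![(n : ℝ≥0)⁻¹, 1 - (n : ℝ≥0)⁻¹] := by
      funext j'
      fin_cases j'
      · show ∑ i ∈ Finset.univ.filter (fun i => f i = (0 : Fin 2)), (n : ℝ≥0)⁻¹
            = ![(n : ℝ≥0)⁻¹, 1 - (n : ℝ≥0)⁻¹] 0
        have hfil : Finset.univ.filter (fun i => f i = (0 : Fin 2)) = {j} := by
          ext i
          by_cases h : i = j <;> simp [hf, h]
        simp [hfil]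
      · show ∑ i ∈ Finset.univ.filter (fun i => f i = (1 : Fin 2)), (n : ℝ≥0)⁻¹
            = ![(n : ℝ≥0)⁻¹, 1 - (n : ℝ≥0)⁻¹] 1
        have hfil : Finset.univ.filter (fun i => f i = (1 : Fin 2)) = {j}ᶜ := by
          ext i
          by_cases h : i = j <;> simp [hf, h]
        rw [hfil, Finset.sum_const, Finset.card_compl, Finset.card_singleton,
          Fintype.card_fin, nsmul_eq_mul]
        have hgoal : ((n - 1 : ℕ) : ℝ≥0) * (n : ℝ≥0)⁻¹ = 1 - (n : ℝ≥0)⁻¹ := by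
          rw [eq_tsub_iff_add_eq_of_le hinvle]
          have hcast : ((n - 1 : ℕ) : ℝ≥0) + 1 = (n : ℝ≥0) := by
            have hnat : ((n - 1) + 1 : ℕ) = n := by omega
            exact_mod_cast congrArg (Nat.cast : ℕ → ℝ≥0) hnat
          calc ((n - 1 : ℕ) : ℝ≥0) * (n : ℝ≥0)⁻¹ + (n : ℝ≥0)⁻¹
              = (((n - 1 : ℕ) : ℝ≥0) + 1) * (n : ℝ≥0)⁻¹ := by ring
            _ = (n : ℝ≥0) * (n : ℝ≥0)⁻¹ := by rw [hcast]
            _ = 1 := mul_inv_cancel₀ hn0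
        simpa using hgoal
    rw [hpush] at hfun
    have hcomp : (![(1 : ℝ≥0), 0] ∘ f) = fun i : Fin n => if i = j then (1 : ℝ≥0) else 0 := by
      funext i
      by_cases h : i = j <;> simp [hf, h]
    rw [hcomp] at hfun
    rw [← hfun, hθ ((n : ℝ≥0)⁻¹) (inv_pos.2 (by exact_mod_cast (by omega : 0 < n)))
      (inv_lt_one_of_one_lt₀ (by exact_mod_cast (by omega : 1 < n)))]
    exact NNReal.rpow_pos (inv_pos.2 (by exact_mod_cast (by omega : 0 < n)))

end MeanSystemAux

/-- Let `M` be a convex multiplicative system of means and `p ∈ [1,∞]` with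
`M((s,1−s),(1,0)) = s^{1/p}` for all `s ∈ (0,1)` (with `1/∞ = 0`).  Then for each `n ≥ 1`
the function `x ↦ n^{1/p} · M(u_n, (|x_1|,…,|x_n|))` is a norm on `ℝⁿ`: it satisfies the
triangle inequality, absolute homogeneity, and vanishes only at `0`. -/
theorem meanSystem_norm (S : MeanSystem)
    (hconv : S.IsConvex) (hmul : S.IsMultiplicative)
    (p : ℝ≥0∞) (hp : 1 ≤ p)
    (hθ : ∀ s : ℝ≥0, 0 < s → s < 1 → S.M 2 ![s, 1 - s] ![1, 0] = s ^ p.toReal⁻¹)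
    (n : ℕ) (hn : 1 ≤ n) :
    (∀ x y : Fin n → ℝ,
        (n : ℝ≥0) ^ p.toReal⁻¹ * S.M n (fun _ => (n : ℝ≥0)⁻¹) (fun i => ‖x i + y i‖₊)
          ≤ (n : ℝ≥0) ^ p.toReal⁻¹ * S.M n (fun _ => (n : ℝ≥0)⁻¹) (fun i => ‖x i‖₊)
            + (n : ℝ≥0) ^ p.toReal⁻¹ * S.M n (fun _ => (n : ℝ≥0)⁻¹) (fun i => ‖y i‖₊)) ∧
    (∀ (c : ℝ) (x : Fin n → ℝ),
        (n : ℝ≥0) ^ p.toReal⁻¹ * S.M n (fun _ => (n : ℝ≥0)⁻¹) (fun i => ‖c * x i‖₊)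
          = ‖c‖₊ * ((n : ℝ≥0) ^ p.toReal⁻¹
              * S.M n (fun _ => (n : ℝ≥0)⁻¹) (fun i => ‖x i‖₊))) ∧
    (∀ x : Fin n → ℝ,
        (n : ℝ≥0) ^ p.toReal⁻¹ * S.M n (fun _ => (n : ℝ≥0)⁻¹) (fun i => ‖x i‖₊) = 0
          → x = 0) := by
  have hw : (∑ _i : Fin n, (n : ℝ≥0)⁻¹) = 1 := sum_unif hn
  have hn0 : (0 : ℝ≥0) < (n : ℝ≥0) := by exact_mod_cast (by omega : 0 < n)
  have hC0 : 0 < (n : ℝ≥0) ^ p.toReal⁻¹ := NNReal.rpow_pos hn0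
  refine ⟨?_, ?_, ?_⟩
  · intro x y
    have h1 : S.M n (fun _ => (n : ℝ≥0)⁻¹) (fun i => ‖x i + y i‖₊)
        ≤ S.M n (fun _ => (n : ℝ≥0)⁻¹) (fun i => ‖x i‖₊ + ‖y i‖₊) :=
      S.mono _ _ _ hw fun i => nnnorm_add_le _ _
    have h2 := mean_subadd S hconv hmul _ hw (fun i => ‖x i‖₊) (fun i => ‖y i‖₊)
    calc (n : ℝ≥0) ^ p.toReal⁻¹ * S.M n (fun _ => (n : ℝ≥0)⁻¹) (fun i => ‖x i + y i‖₊)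
        ≤ (n : ℝ≥0) ^ p.toReal⁻¹
            * (S.M n (fun _ => (n : ℝ≥0)⁻¹) (fun i => ‖x i‖₊)
              + S.M n (fun _ => (n : ℝ≥0)⁻¹) (fun i => ‖y i‖₊)) :=
          mul_le_mul_right (h1.trans h2) _
      _ = (n : ℝ≥0) ^ p.toReal⁻¹ * S.M n (fun _ => (n : ℝ≥0)⁻¹) (fun i => ‖x i‖₊)
            + (n : ℝ≥0) ^ p.toReal⁻¹ * S.M n (fun _ => (n : ℝ≥0)⁻¹) (fun i => ‖y i‖₊) :=
          mul_add _ _ _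
  · intro c x
    have hnn : (fun i => ‖c * x i‖₊) = fun i => ‖c‖₊ * ‖x i‖₊ := by
      funext i; exact nnnorm_mul _ _
    rw [hnn, mean_homog S hmul _ _ hw ‖c‖₊]
    ring
  · intro x hx
    have hM0 : S.M n (fun _ => (n : ℝ≥0)⁻¹) (fun i => ‖x i‖₊) = 0 := by
      rcases mul_eq_zero.1 hx with h | h
      · exact absurd h hC0.ne'
      · exact h
    funext j
    have hj := mean_indicator_pos S p hθ hn j
    have hle : ‖x j‖₊ * S.M n (fun _ => (n : ℝ≥0)⁻¹) (fun i => if i = j then 1 else 0)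
        ≤ S.M n (fun _ => (n : ℝ≥0)⁻¹) (fun i => ‖x i‖₊) := by
      rw [← mean_homog S hmul _ _ hw]
      exact S.mono _ _ _ hw fun i => by by_cases h : i = j <;> simp [h]
    rw [hM0, le_zero_iff, mul_eq_zero] at hle
    have hxj : ‖x j‖₊ = 0 := by
      rcases hle with h | h
      · exact h
      · exact absurd h hj.ne'
    simpa using hxj
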